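/- For every n×n complex matrix M, every ε > 0, and every z ∈ ℂ, the following are equivalent: (i) z ∈ σ_ε(M), i.e. z ∈ σ(M) or ‖(M - z·I)⁻¹‖ > 1/ε; (ii) there exists an n×n complex matrix V with operator norm ‖V‖ < ε such that z ∈ σ(M + V); (iii) there exists a nonzero vector u ∈ ℂⁿ with ‖(M - z·I) u‖ < ε ‖u‖. -/

import Mathlib

open Matrix

/-- The ℓ² operator norm of a complex matrix, viewed as a bounded operator
on `EuclideanSpace ℂ (Fin n)`. -/
noncomputable def matNorm {n : ℕ} (M : Matrix (Fin n) (Fin n) ℂ) : ℝ :=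
  ‖Matrix.toEuclideanCLM (𝕜 := ℂ) (n := Fin n) M‖

/-- The action of a complex matrix on `EuclideanSpace ℂ (Fin n)`. -/
noncomputable def matAct {n : ℕ} (M : Matrix (Fin n) (Fin n) ℂ)
    (v : EuclideanSpace ℂ (Fin n)) : EuclideanSpace ℂ (Fin n) :=
  Matrix.toEuclideanCLM (𝕜 := ℂ) (n := Fin n) M v

/-- The weighted Hermitian inner product `⟨v,u⟩_G := ⟨F v, F u⟩₂`, conjugate-linear in the
first argument. -/
noncomputable def gInner {n : ℕ} (F : Matrix (Fin n) (Fin n) ℂ)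
    (v u : EuclideanSpace ℂ (Fin n)) : ℂ :=
  inner ℂ (matAct F v) (matAct F u)

/-- The weighted norm `‖u‖_G := ‖F u‖₂`. -/
noncomputable def gNorm {n : ℕ} (F : Matrix (Fin n) (Fin n) ℂ)
    (u : EuclideanSpace ℂ (Fin n)) : ℝ :=
  ‖matAct F u‖

/-- The ε-pseudospectrum of a complex matrix:
`σ_ε(M) := σ(M) ∪ {z ∉ σ(M) : ‖(M - z·I)⁻¹‖ > 1/ε}`. -/
noncomputable def pseudospectrum {n : ℕ} (ε : ℝ) (M : Matrix (Fin n) (Fin n) ℂ) : Set ℂ :=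
  spectrum ℂ M ∪ {z | z ∉ spectrum ℂ M ∧ 1 / ε < matNorm ((M - z • 1)⁻¹)}

namespace PseudoAux

variable {n : ℕ}

lemma matAct_eq (A : Matrix (Fin n) (Fin n) ℂ) (u : EuclideanSpace ℂ (Fin n)) :
    matAct A u = (WithLp.equiv 2 (Fin n → ℂ)).symm (A.mulVec (WithLp.equiv 2 _ u)) := by
  have h := Matrix.ofLp_toEuclideanCLM (𝕜 := ℂ) (n := Fin n) A u
  have h2 : matAct A u = (WithLp.equiv 2 (Fin n → ℂ)).symm
      (Matrix.toLin' A (WithLp.equiv 2 _ u)) := by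
    rfl
  rw [h2, Matrix.toLin'_apply]

lemma matAct_mul (X Y : Matrix (Fin n) (Fin n) ℂ) (u : EuclideanSpace ℂ (Fin n)) :
    matAct (X * Y) u = matAct X (matAct Y u) := by
  unfold matAct; rw [_root_.map_mul]; rfl

lemma matAct_one (u : EuclideanSpace ℂ (Fin n)) : matAct (1 : Matrix (Fin n) (Fin n) ℂ) u = u := by
  unfold matAct; rw [_root_.map_one]; rfl

lemma matAct_add (X Y : Matrix (Fin n) (Fin n) ℂ) (u : EuclideanSpace ℂ (Fin n)) :
    matAct (X + Y) u = matAct X u + matAct Y u := by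
  unfold matAct; rw [_root_.map_add]; rfl

lemma norm_matAct_le (A : Matrix (Fin n) (Fin n) ℂ) (u : EuclideanSpace ℂ (Fin n)) :
    ‖matAct A u‖ ≤ matNorm A * ‖u‖ :=
  (Matrix.toEuclideanCLM (𝕜 := ℂ) (n := Fin n) A).le_opNorm u

lemma mem_spectrum_iff (B : Matrix (Fin n) (Fin n) ℂ) (z : ℂ) :
    z ∈ spectrum ℂ B ↔ ∃ u : EuclideanSpace ℂ (Fin n), u ≠ 0 ∧ matAct (B - z • 1) u = 0 := by
  rw [spectrum.mem_iff, Algebra.algebraMap_eq_smul_one, ← neg_sub B (z • 1), IsUnit.neg_iff _,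
    Matrix.isUnit_iff_isUnit_det, isUnit_iff_ne_zero, not_ne_iff,
    ← Matrix.exists_mulVec_eq_zero_iff]
  constructor
  · rintro ⟨v, hv, hv0⟩
    refine ⟨(WithLp.equiv 2 (Fin n → ℂ)).symm v, by simpa using hv, ?_⟩
    rw [matAct_eq]
    simp [hv0]
  · rintro ⟨u, hu, hu0⟩
    refine ⟨WithLp.equiv 2 (Fin n → ℂ) u, by simpa using hu, ?_⟩
    rw [matAct_eq] at hu0
    simpa using hu0

lemma isUnit_of_not_mem {B : Matrix (Fin n) (Fin n) ℂ} {z : ℂ} (h : z ∉ spectrum ℂ B) :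
    IsUnit (B - z • 1) := by
  rw [spectrum.notMem_iff, Algebra.algebraMap_eq_smul_one, ← neg_sub B (z • 1),
    IsUnit.neg_iff _] at h
  exact h

end PseudoAux

open PseudoAux in
/-- The three equivalent characterizations of the ε-pseudospectrum: the resolvent-norm
definition, the perturbative definition, and the pseudoeigenvector definition. -/
theorem pseudospectrum_equiv_defs {n : ℕ} (M : Matrix (Fin n) (Fin n) ℂ)
    (ε : ℝ) (hε : 0 < ε) (z : ℂ) :
    (z ∈ pseudospectrum ε M ↔
        ∃ V : Matrix (Fin n) (Fin n) ℂ, matNorm V < ε ∧ z ∈ spectrum ℂ (M + V)) ∧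
      (z ∈ pseudospectrum ε M ↔
        ∃ u : EuclideanSpace ℂ (Fin n), u ≠ 0 ∧ ‖matAct (M - z • 1) u‖ < ε * ‖u‖) := by
  set A := M - z • (1 : Matrix (Fin n) (Fin n) ℂ) with hA
  -- (iii) → (i)
  have h31 : (∃ u : EuclideanSpace ℂ (Fin n), u ≠ 0 ∧ ‖matAct A u‖ < ε * ‖u‖) →
      z ∈ pseudospectrum ε M := by
    rintro ⟨u, hu, hlt⟩
    by_cases hz : z ∈ spectrum ℂ M
    · exact Or.inl hz
    · refine Or.inr ⟨hz, ?_⟩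
      have hAu : IsUnit A := isUnit_of_not_mem hz
      have hdet : IsUnit A.det := (Matrix.isUnit_iff_isUnit_det A).mp hAu
      have hinv : A⁻¹ * A = 1 := Matrix.nonsing_inv_mul A hdet
      have hu' : u = matAct A⁻¹ (matAct A u) := by
        rw [← matAct_mul, hinv, matAct_one]
      have hun : (0:ℝ) < ‖u‖ := norm_pos_iff.mpr hu
      by_contra hcon
      push_neg at hcon
      have h1 : ‖u‖ ≤ matNorm A⁻¹ * ‖matAct A u‖ := by
        conv_lhs => rw [hu']
        exact norm_matAct_le _ _
      have h2 : matNorm A⁻¹ * ‖matAct A u‖ ≤ (1 / ε) * ‖matAct A u‖ :=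
        mul_le_mul_of_nonneg_right hcon (norm_nonneg _)
      have h3 : (1 / ε) * ‖matAct A u‖ < (1 / ε) * (ε * ‖u‖) :=
        mul_lt_mul_of_pos_left hlt (by positivity)
      have h4 : (1 / ε) * (ε * ‖u‖) = ‖u‖ := by field_simp
      linarith
  -- (i) → (iii)
  have h13 : z ∈ pseudospectrum ε M →
      ∃ u : EuclideanSpace ℂ (Fin n), u ≠ 0 ∧ ‖matAct A u‖ < ε * ‖u‖ := by
    intro hz
    rcases hz with hz | ⟨hz, hlt⟩
    · obtain ⟨u, hu, hu0⟩ := (mem_spectrum_iff M z).mp hz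
      exact ⟨u, hu, by rw [hu0]; simpa using mul_pos hε (norm_pos_iff.mpr hu)⟩
    · have hAu : IsUnit A := isUnit_of_not_mem hz
      have hdet : IsUnit A.det := (Matrix.isUnit_iff_isUnit_det A).mp hAu
      have hinv : A * A⁻¹ = 1 := Matrix.mul_nonsing_inv A hdet
      obtain ⟨x, hx1, hx2⟩ :=
        (Matrix.toEuclideanCLM (𝕜 := ℂ) (n := Fin n) A⁻¹).exists_lt_apply_of_lt_opNorm hlt
      set u := matAct A⁻¹ x with hu
      have hxu : matAct A u = x := by
        rw [hu, ← matAct_mul, hinv, matAct_one]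
      have hux : (1/ε : ℝ) < ‖u‖ := hx2
      have hupos : (0:ℝ) < ‖u‖ := lt_trans (by positivity) hux
      refine ⟨u, norm_pos_iff.mp hupos, ?_⟩
      rw [hxu]
      have : (1:ℝ) < ε * ‖u‖ := by
        rw [div_lt_iff₀ hε] at hux
        nlinarith [hux]
      linarith
  -- (iii) → (ii)
  have h32 : (∃ u : EuclideanSpace ℂ (Fin n), u ≠ 0 ∧ ‖matAct A u‖ < ε * ‖u‖) →
      ∃ V : Matrix (Fin n) (Fin n) ℂ, matNorm V < ε ∧ z ∈ spectrum ℂ (M + V) := by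
    rintro ⟨u, hu, hlt⟩
    have hun : (0:ℝ) < ‖u‖ := norm_pos_iff.mpr hu
    set w : EuclideanSpace ℂ (Fin n) := matAct A u with hw
    set c : ℂ := (‖u‖ : ℂ)^2 with hc
    have hc0 : c ≠ 0 := by
      rw [hc]
      exact pow_ne_zero 2 (Complex.ofReal_ne_zero.mpr hun.ne')
    set V : Matrix (Fin n) (Fin n) ℂ :=
      Matrix.vecMulVec (fun i => -c⁻¹ * (WithLp.equiv 2 (Fin n → ℂ) w i))
        (star (WithLp.equiv 2 (Fin n → ℂ) u)) with hV
    have hVx : ∀ x : EuclideanSpace ℂ (Fin n),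
        matAct V x = (-c⁻¹ * (inner ℂ u x : ℂ)) • w := by
      intro x
      rw [matAct_eq]
      apply (WithLp.equiv 2 (Fin n → ℂ)).symm_apply_eq.mpr ?_
      funext i
      simp only [hV, Matrix.mulVec, dotProduct, Matrix.vecMulVec_apply,
        EuclideanSpace.inner_eq_star_dotProduct, dotProduct]
      simp only [WithLp.equiv_apply, WithLp.ofLp_smul, Pi.smul_apply, smul_eq_mul, Finset.mul_sum,
        Pi.star_apply]
      rw [Finset.sum_mul]
      congr 1
      funext j
      ring
    have hVu : matAct V u = -w := by
      rw [hVx u]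
      have : (inner ℂ u u : ℂ) = c := by
        rw [inner_self_eq_norm_sq_to_K, hc]; norm_cast
      rw [this]
      rw [neg_mul, inv_mul_cancel₀ hc0]
      simp
    refine ⟨V, ?_, ?_⟩
    · -- norm bound
      have hb : matNorm V ≤ ‖w‖ / ‖u‖ := by
        apply ContinuousLinearMap.opNorm_le_bound _ (by positivity)
        intro x
        have : (Matrix.toEuclideanCLM (𝕜 := ℂ) (n := Fin n) V) x = matAct V x := rfl
        rw [this, hVx x, norm_smul]
        have h1 : ‖-c⁻¹ * (inner ℂ u x : ℂ)‖ ≤ ‖u‖⁻¹ * ‖u‖⁻¹ * (‖u‖ * ‖x‖) := by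
          rw [norm_mul, norm_neg, norm_inv, hc]
          have hcs : ‖((‖u‖:ℂ))^2‖ = ‖u‖ * ‖u‖ := by
            rw [norm_pow]
            simp [sq, Complex.norm_real, abs_of_nonneg hun.le]
          rw [hcs, mul_inv]
          exact mul_le_mul_of_nonneg_left (norm_inner_le_norm u x) (by positivity)
        calc ‖-c⁻¹ * (inner ℂ u x : ℂ)‖ * ‖w‖ ≤ (‖u‖⁻¹ * ‖u‖⁻¹ * (‖u‖ * ‖x‖)) * ‖w‖ :=
              mul_le_mul_of_nonneg_right h1 (norm_nonneg _)
          _ = ‖w‖ / ‖u‖ * ‖x‖ := by field_simp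
      have hb2 : ‖w‖ / ‖u‖ < ε := by
        rw [div_lt_iff₀ hun]
        linarith [hlt]
      linarith
    · rw [mem_spectrum_iff]
      refine ⟨u, hu, ?_⟩
      have : M + V - z • 1 = A + V := by rw [hA, add_sub_right_comm]
      rw [this, matAct_add, hVu, hw]
      simp
  -- (ii) → (iii)
  have h23 : (∃ V : Matrix (Fin n) (Fin n) ℂ, matNorm V < ε ∧ z ∈ spectrum ℂ (M + V)) →
      ∃ u : EuclideanSpace ℂ (Fin n), u ≠ 0 ∧ ‖matAct A u‖ < ε * ‖u‖ := by
    rintro ⟨V, hV, hz⟩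
    obtain ⟨u, hu, hu0⟩ := (mem_spectrum_iff (M + V) z).mp hz
    have hun : (0:ℝ) < ‖u‖ := norm_pos_iff.mpr hu
    have hsplit : M + V - z • 1 = A + V := by rw [hA, add_sub_right_comm]
    rw [hsplit, matAct_add] at hu0
    have hAu : matAct A u = -matAct V u := by
      rw [eq_neg_iff_add_eq_zero]; exact hu0
    refine ⟨u, hu, ?_⟩
    rw [hAu, norm_neg]
    calc ‖matAct V u‖ ≤ matNorm V * ‖u‖ := norm_matAct_le V u
      _ < ε * ‖u‖ := mul_lt_mul_of_pos_right hV hun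
  exact ⟨⟨fun h => h32 (h13 h), fun h => h31 (h23 h)⟩, ⟨h13, h31⟩⟩
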